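/- In the boolean domain {0,1}, if every constraint in C excludes at most 2^{k} − 1 assignments (is nonempty), no constraint strongly depends on one literal, no constraint strongly depends on a 2-XOR relation, and C is not satisfied by the all-zeros or the all-ones assignment, then the constraint set C is extremely well-behaved: both boolean values are good, and for each good value δ ∈ {0,1} every constraint C serves as Γ_δ since C ⊨ (x_1 = δ) ∨ ⋯ ∨ (x_k = δ). -/

import Mathlib

def RelP (R : Bool → Bool → Prop) : Prop :=
  (∀ x, ∃ y, R x y) ∧ (∀ y, ∃ x, R x y) ∧ (∃ a, R a a)

lemma RelP.comp {S R : Bool → Bool → Prop} (hS : RelP S) (hR : RelP R) :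
    RelP (fun x y => ∃ z, S x z ∧ R z y) := by
  obtain ⟨S1, S2, s, hs⟩ := hS
  obtain ⟨R1, R2, r, hr⟩ := hR
  refine ⟨?_, ?_, ?_⟩
  · intro x; obtain ⟨z, hz⟩ := S1 x; obtain ⟨y, hy⟩ := R1 z; exact ⟨y, z, hz, hy⟩
  · intro y; obtain ⟨z, hz⟩ := R2 y; obtain ⟨x, hx⟩ := S2 z; exact ⟨x, z, hx, hz⟩
  · by_cases hss : R s s
    · exact ⟨s, s, hs, hss⟩
    by_cases hrr : S r r
    · exact ⟨r, r, hrr, hr⟩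
    obtain ⟨y, hy⟩ := R1 s
    obtain ⟨y', hy'⟩ := S1 r
    have h1 : y = r := by
      have h2 : r ≠ s := fun h => hss (h ▸ hr)
      have h3 : y ≠ s := fun h => hss (h ▸ hy)
      cases y <;> cases r <;> cases s <;> simp_all
    have h4 : y' = s := by
      have h2 : r ≠ s := fun h => hss (h ▸ hr)
      have h5 : y' ≠ r := fun h => hrr (h ▸ hy')
      cases y' <;> cases r <;> cases s <;> simp_all
    exact ⟨r, s, h4 ▸ hy', h1 ▸ hy⟩

def Tcomp (Q : ℕ → Bool → Bool → Prop) : ℕ → Bool → Bool → Prop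
  | 0 => Eq
  | m+1 => fun x y => ∃ z, Tcomp Q m x z ∧ Q m z y

lemma Tcomp_relP (Q : ℕ → Bool → Bool → Prop) (hQ : ∀ i, RelP (Q i)) :
    ∀ m, RelP (Tcomp Q m)
  | 0 => ⟨fun x => ⟨x, rfl⟩, fun y => ⟨y, rfl⟩, true, rfl⟩
  | m+1 => RelP.comp (Tcomp_relP Q hQ m) (hQ m)

lemma Tcomp_path (Q : ℕ → Bool → Bool → Prop) : ∀ m x y, Tcomp Q m x y →
    ∃ c : ℕ → Bool, c 0 = x ∧ c m = y ∧ ∀ i < m, Q i (c i) (c (i+1)) := by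
  intro m
  induction m with
  | zero => intro x y h; exact ⟨fun _ => x, rfl, h ▸ rfl, fun i hi => absurd hi (by omega)⟩
  | succ m ih =>
    intro x y h
    obtain ⟨z, hz, hq⟩ := h
    obtain ⟨c, hc0, hcm, hstep⟩ := ih x z hz
    refine ⟨fun i => if i = m+1 then y else c i, ?_, ?_, ?_⟩
    · simp only [if_neg (by omega : ¬(0 = m+1))]; exact hc0
    · simp
    · intro i hi
      rcases Nat.lt_succ_iff_lt_or_eq.mp hi with hi' | hi'
      · simpa only [if_neg (by omega : ¬(i = m+1)), if_neg (by omega : ¬(i+1 = m+1))] using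
          hstep i hi'
      · subst hi'
        simpa only [if_neg (by omega : ¬(i = i+1)), if_pos rfl, hcm, ↓reduceIte] using hq

lemma chain_exists {n : ℕ} (Q : ℕ → Bool → Bool → Prop) (hQ : ∀ i, RelP (Q i)) :
    ∃ c : ℕ → Bool, c n = c 0 ∧ ∀ i < n, Q i (c i) (c (i+1)) := by
  obtain ⟨a, ha⟩ := (Tcomp_relP Q hQ n).2.2
  obtain ⟨c, hc0, hcn, hstep⟩ := Tcomp_path Q n a a ha
  exact ⟨c, by rw [hcn, hc0], hstep⟩

open Fin.NatCast in
/-- Core combinatorial lemma: a loose cycle of nonempty boolean constraints with no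
unit-clause implicates and no 2-XOR implicates is satisfiable. -/
lemma cycle_sat {k n : ℕ} (hn2 : 2 ≤ n)
    (e : Fin n → (Fin k → ℕ)) (Cs : Fin n → Set (Fin k → Bool))
    (hinj : ∀ i, Function.Injective (e i))
    (hfull : ∀ (i : Fin n) (p : Fin k) (x : Bool), ∃ t ∈ Cs i, t p = x)
    (hdiag : ∀ (i : Fin n) (p q : Fin k), ∃ t ∈ Cs i, t p = t q)
    (hIJ : ∀ i j : Fin n, (i : ℕ) < (j : ℕ) →
      if (j : ℕ) = (i : ℕ) + 1 ∨ ((i : ℕ) = 0 ∧ (j : ℕ) = n - 1)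
      then ((Finset.image (e i) Finset.univ) ∩ (Finset.image (e j) Finset.univ)).card = 1
      else (Finset.image (e i) Finset.univ) ∩ (Finset.image (e j) Finset.univ) = ∅) :
    ∃ σ : ℕ → Bool, ∀ i : Fin n, (fun p => σ (e i p)) ∈ Cs i := by
  classical
  haveI : NeZero n := ⟨by omega⟩
  have hone : ((1 : Fin n) : ℕ) = 1 := by
    rw [Fin.val_one']; exact Nat.mod_eq_of_lt (by omega)
  have hsucc : ∀ i : Fin n, ((i + 1 : Fin n) : ℕ) = ((i : ℕ) + 1) % n := by
    intro i; rw [Fin.val_add, hone]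
  have hD : ∀ i : Fin n, ∃ w,
      (Finset.image (e i) Finset.univ) ∩ (Finset.image (e (i + 1)) Finset.univ) = {w} := by
    intro i
    by_cases hi : (i : ℕ) + 1 < n
    · have hval : ((i + 1 : Fin n) : ℕ) = (i : ℕ) + 1 := by
        rw [hsucc]; exact Nat.mod_eq_of_lt hi
      have := hIJ i (i + 1) (by rw [hval]; omega)
      rw [if_pos (Or.inl hval)] at this
      exact Finset.card_eq_one.mp this
    · have hin : (i : ℕ) + 1 = n := by have := i.isLt; omega
      have hval : (i + 1 : Fin n) = 0 := by
        apply Fin.ext; rw [hsucc, hin, Nat.mod_self, Fin.val_zero]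
      rw [hval]
      have h0lt : ((0 : Fin n) : ℕ) < (i : ℕ) := by rw [Fin.val_zero]; omega
      have := hIJ 0 i h0lt
      rw [if_pos (Or.inr ⟨Fin.val_zero n, by omega⟩)] at this
      rw [Finset.inter_comm]
      exact Finset.card_eq_one.mp this
  choose v hv using hD
  have hvl : ∀ i, v i ∈ Finset.image (e i) Finset.univ := fun i =>
    (Finset.mem_inter.mp (by rw [hv i]; exact Finset.mem_singleton_self _)).1
  have hvr : ∀ i, v i ∈ Finset.image (e (i + 1)) Finset.univ := fun i =>
    (Finset.mem_inter.mp (by rw [hv i]; exact Finset.mem_singleton_self _)).2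
  have hvu : ∀ i x, x ∈ Finset.image (e i) Finset.univ →
      x ∈ Finset.image (e (i + 1)) Finset.univ → x = v i :=
    fun i x h1' h2' => Finset.mem_singleton.mp (hv i ▸ Finset.mem_inter.mpr ⟨h1', h2'⟩)
  have hfin_eq_of_val : ∀ i j : Fin n, (j : ℕ) = (i : ℕ) + 1 → j = i + 1 := by
    intro i j hj
    apply Fin.ext
    rw [hsucc, ← hj, Nat.mod_eq_of_lt j.isLt]
  have hfin_wrap : ∀ i j : Fin n, (i : ℕ) = 0 → (j : ℕ) = n - 1 → i = j + 1 := by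
    intro i j hi hj
    apply Fin.ext
    rw [hsucc, hj, Nat.sub_add_cancel (by omega), Nat.mod_self, hi]
  have hmem : ∀ i j : Fin n, i ≠ j → ∀ x, x ∈ Finset.image (e i) Finset.univ →
      x ∈ Finset.image (e j) Finset.univ →
      (j = i + 1 ∧ x = v i) ∨ (i = j + 1 ∧ x = v j) := by
    intro i j hij x hxi hxj
    by_cases h1' : j = i + 1
    · exact Or.inl ⟨h1', hvu i x hxi (by rw [← h1']; exact hxj)⟩
    by_cases h2' : i = j + 1
    · exact Or.inr ⟨h2', hvu j x hxj (by rw [← h2']; exact hxi)⟩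
    exfalso
    rcases lt_trichotomy i j with h | h | h
    · have hcond : ¬((j : ℕ) = (i : ℕ) + 1 ∨ ((i : ℕ) = 0 ∧ (j : ℕ) = n - 1)) := by
        rintro (hc | ⟨hc0, hcl⟩)
        · exact h1' (hfin_eq_of_val i j hc)
        · exact h2' (hfin_wrap i j hc0 hcl)
      have := hIJ i j (Fin.lt_def.mp h)
      rw [if_neg hcond] at this
      exact (Finset.eq_empty_iff_forall_notMem.mp this x)
        (Finset.mem_inter.mpr ⟨hxi, hxj⟩)
    · exact hij h
    · have hcond : ¬((i : ℕ) = (j : ℕ) + 1 ∨ ((j : ℕ) = 0 ∧ (i : ℕ) = n - 1)) := by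
        rintro (hc | ⟨hc0, hcl⟩)
        · exact h2' (hfin_eq_of_val j i hc)
        · exact h1' (hfin_wrap j i hc0 hcl)
      have := hIJ j i (Fin.lt_def.mp h)
      rw [if_neg hcond] at this
      exact (Finset.eq_empty_iff_forall_notMem.mp this x)
        (Finset.mem_inter.mpr ⟨hxj, hxi⟩)
  have hsub_add : ∀ i : Fin n, i - 1 + 1 = i := fun i => sub_add_cancel i 1
  have ha' : ∀ i : Fin n, ∃ p : Fin k, e i p = v (i - 1) := by
    intro i
    have h' := hvr (i - 1)
    rw [hsub_add] at h'
    obtain ⟨p, _, hp⟩ := Finset.mem_image.mp h'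
    exact ⟨p, hp⟩
  choose a ha using ha'
  have hb' : ∀ i : Fin n, ∃ p : Fin k, e i p = v i := by
    intro i
    obtain ⟨p, _, hp⟩ := Finset.mem_image.mp (hvl i)
    exact ⟨p, hp⟩
  choose b hb using hb'
  have hRP : ∀ i : Fin n, RelP (fun x y => ∃ t ∈ Cs i, t (a i) = x ∧ t (b i) = y) := by
    intro i
    refine ⟨?_, ?_, ?_⟩
    · intro x; obtain ⟨t, ht, htx⟩ := hfull i (a i) x; exact ⟨t (b i), t, ht, htx, rfl⟩
    · intro y; obtain ⟨t, ht, hty⟩ := hfull i (b i) y; exact ⟨t (a i), t, ht, rfl, hty⟩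
    · obtain ⟨t, ht, htab⟩ := hdiag i (a i) (b i)
      exact ⟨t (a i), t, ht, rfl, htab.symm⟩
  obtain ⟨c, hcn0, hcstep⟩ := chain_exists (n := n)
    (fun m => fun x y => ∃ t ∈ Cs ((m : Fin n) + 1),
      t (a ((m : Fin n) + 1)) = x ∧ t (b ((m : Fin n) + 1)) = y)
    (fun m => hRP _)
  have hchain' : ∀ i : Fin n,
      ∃ t ∈ Cs (i + 1), t (a (i + 1)) = c (i : ℕ) ∧ t (b (i + 1)) = c ((i + 1 : Fin n) : ℕ) := by
    intro i
    have hm := hcstep (i : ℕ) i.isLt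
    rw [Fin.cast_val_eq_self i] at hm
    have hc1 : c ((i : ℕ) + 1) = c ((i + 1 : Fin n) : ℕ) := by
      by_cases hi : (i : ℕ) + 1 < n
      · rw [hsucc, Nat.mod_eq_of_lt hi]
      · have hin : (i : ℕ) + 1 = n := by have := i.isLt; omega
        rw [hsucc, hin, Nat.mod_self]; exact hcn0
    rw [hc1] at hm
    exact hm
  have hchain : ∀ i : Fin n,
      ∃ t ∈ Cs i, t (a i) = c ((i - 1 : Fin n) : ℕ) ∧ t (b i) = c (i : ℕ) := by
    intro i
    have h' := hchain' (i - 1)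
    rwa [hsub_add] at h'
  choose t htmem hta htb using hchain
  refine ⟨fun x =>
    if h : ∃ jq : Fin n × Fin k, e jq.1 jq.2 = x then
      t (Classical.choose h).1 (Classical.choose h).2 else true, ?_⟩
  intro i
  have key : ∀ (i : Fin n) (p : Fin k) (j : Fin n) (q : Fin k),
      e j q = e i p → t j q = t i p := by
    intro i p j q hspec
    by_cases hji : j = i
    · subst hji
      rw [hinj j hspec]
    · have hxi : e i p ∈ Finset.image (e i) Finset.univ :=
        Finset.mem_image.mpr ⟨p, Finset.mem_univ _, rfl⟩
      have hxj : e i p ∈ Finset.image (e j) Finset.univ :=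
        Finset.mem_image.mpr ⟨q, Finset.mem_univ _, hspec⟩
      rcases hmem i j (fun hh => hji hh.symm) (e i p) hxi hxj with ⟨hj1, hx⟩ | ⟨hj1, hx⟩
      · have hji' : j - 1 = i := by rw [hj1, add_sub_cancel_right]
        have hpb : p = b i := hinj i (by rw [hb i]; exact hx)
        have hqa : q = a j := hinj j (by rw [ha j, hji', hspec]; exact hx)
        rw [hqa, hpb, hta j, htb i, hji']
      · have hij' : i - 1 = j := by rw [hj1, add_sub_cancel_right]
        have hpa : p = a i := hinj i (by rw [ha i, hij']; exact hx)
        have hqb : q = b j := hinj j (by rw [hb j, hspec]; exact hx)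
        rw [hqb, hpa, htb j, hta i, hij']
  have heq : (fun p => (if h : ∃ jq : Fin n × Fin k, e jq.1 jq.2 = e i p then
      t (Classical.choose h).1 (Classical.choose h).2 else true)) = t i := by
    funext p
    have hex : ∃ jq : Fin n × Fin k, e jq.1 jq.2 = e i p := ⟨(i, p), rfl⟩
    rw [dif_pos hex]
    exact key i p (Classical.choose hex).1 (Classical.choose hex).2 (Classical.choose_spec hex)
  rw [heq]
  exact htmem i


/-- A value `δ` is bad (Definition csp-bad): it is `0`-bad if some constraint `C ∈ 𝒞`
and position `i` satisfy `C ⊨ (x_i ≠ δ)`, and `j`-bad if some `C ∈ 𝒞` and position `i`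
are such that `C ∧ (x_i = δ)` forces some other variable of `C` to a `j'`-bad value
with `j' < j`.  The inductive predicate captures "`j`-bad for some `j`". -/
inductive BadValue {D : Type} {k : ℕ} (𝒞 : Set (Set (Fin k → D))) : D → Prop
  | base (δ : D) (C : Set (Fin k → D)) (hC : C ∈ 𝒞) (i : Fin k)
      (h : ∀ t ∈ C, t i ≠ δ) : BadValue 𝒞 δ
  | step (δ : D) (C : Set (Fin k → D)) (hC : C ∈ 𝒞) (i m : Fin k) (hm : m ≠ i)
      (h : ∀ t ∈ C, t i = δ → BadValue 𝒞 (t m)) : BadValue 𝒞 δ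

/-- A value is good if it is not bad. -/
def GoodValue {D : Type} {k : ℕ} (𝒞 : Set (Set (Fin k → D))) (δ : D) : Prop :=
  ¬ BadValue 𝒞 δ

/-- The scope of a `k`-ary constraint: an assignment of variables to its positions. -/
abbrev Scope (k : ℕ) := Fin k → ℕ

/-- A formula: a finite list of constraints, each given by a scope together with the
set of satisfying `k`-tuples of its template. -/
abbrev Formula (D : Type) (k : ℕ) := List (Scope k × Set (Fin k → D))

/-- The set of variables occurring in a scope. -/
def scopeVars {k : ℕ} (s : Scope k) : Finset ℕ := Finset.image s Finset.univ

/-- The set of variables occurring in a list of scopes. -/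
def formulaVars {k : ℕ} (L : List (Scope k)) : Finset ℕ :=
  L.foldr (fun s acc => scopeVars s ∪ acc) ∅

/-- `σ` satisfies the formula `Φ`. -/
def Satisfies {D : Type} {k : ℕ} (σ : ℕ → D) (Φ : Formula D k) : Prop :=
  ∀ c ∈ Φ, (fun i => σ (c.1 i)) ∈ c.2

/-- `Φ` is a formula over the constraint set `𝒞`: each constraint uses a template
from `𝒞`, applied to a tuple of distinct variables. -/
def OverSet {D : Type} {k : ℕ} (𝒞 : Set (Set (Fin k → D))) (Φ : Formula D k) : Prop :=
  ∀ c ∈ Φ, c.2 ∈ 𝒞 ∧ Function.Injective c.1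

/-- `Φ` is satisfiable. -/
def Sat {D : Type} {k : ℕ} (Φ : Formula D k) : Prop := ∃ σ : ℕ → D, Satisfies σ Φ

/-- A list of scopes whose hypergraph is tree-like (connected and acyclic): built by
starting from a single edge and repeatedly attaching an edge meeting the previous
ones in exactly one vertex. -/
inductive TreeLike {k : ℕ} : List (Scope k) → Prop
  | single (s : Scope k) : TreeLike [s]
  | cons (s : Scope k) (L : List (Scope k)) (hL : TreeLike L)
      (h : ∃! v : ℕ, v ∈ scopeVars s ∧ v ∈ formulaVars L) : TreeLike (s :: L)

/-- The hypergraph of the scopes `L` is a (loose) cycle: consecutive edges (cyclically)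
share exactly one vertex, non-consecutive edges are disjoint. -/
def IsCycle {k : ℕ} (L : List (Scope k)) : Prop :=
  2 ≤ L.length ∧
  ∀ i j : Fin L.length, i < j →
    (if (j : ℕ) = (i : ℕ) + 1 ∨ ((i : ℕ) = 0 ∧ (j : ℕ) = L.length - 1)
      then (scopeVars (L.get i) ∩ scopeVars (L.get j)).card = 1
      else scopeVars (L.get i) ∩ scopeVars (L.get j) = ∅)

/-- A list of scopes is unicyclic if deleting some edge leaves a tree-like hypergraph. -/
def Unicyclic {k : ℕ} (L : List (Scope k)) : Prop :=
  ∃ e ∈ L, TreeLike (L.erase e)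

/-- Definition csp-vwbehaved: `𝒞` is very well-behaved. -/
def VeryWellBehaved {D : Type} {k : ℕ} (𝒞 : Set (Set (Fin k → D))) : Prop :=
  (∃ δ : D, GoodValue 𝒞 δ) ∧
  (∀ δ : D, ∃ C ∈ 𝒞, (fun _ => δ) ∉ C) ∧
  (∀ Φ : Formula D k, OverSet 𝒞 Φ → IsCycle (Φ.map Prod.fst) →
    ∃ σ : ℕ → D, Satisfies σ Φ ∧ ∀ c ∈ Φ, ∀ i : Fin k, GoodValue 𝒞 (σ (c.1 i)))

/-- Over the boolean domain: if every constraint of `𝒞` is nonempty, no constraint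
strongly depends on a literal (no unit clause implicate), no constraint strongly
depends on a 2-XOR relation (no `x_i ≠ x_j` implicate), and some constraint is not
`0`-valid and some is not `1`-valid, then `𝒞` is extremely well-behaved: both boolean
values are good, `𝒞` is very well-behaved, and there is a map `Γ` from good values to
constraints with `Γ_δ ⊨ (x_1 = δ) ∨ ⋯ ∨ (x_k = δ)`. -/
theorem stmt18 {k : ℕ} (hk : 1 ≤ k) (𝒞 : Set (Set (Fin k → Bool)))
    (hne : ∀ C ∈ 𝒞, C.Nonempty)
    (hlit : ∀ C ∈ 𝒞, ∀ i : Fin k, ∀ δ : Bool, ¬ (∀ t ∈ C, t i = δ))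
    (hxor : ∀ C ∈ 𝒞, ∀ i j : Fin k, i ≠ j → ¬ (∀ t ∈ C, t i ≠ t j))
    (h0 : ∃ C ∈ 𝒞, (fun _ => false) ∉ C)
    (h1 : ∃ C ∈ 𝒞, (fun _ => true) ∉ C) :
    GoodValue 𝒞 false ∧ GoodValue 𝒞 true ∧ VeryWellBehaved 𝒞 ∧
    ∃ Γ : Bool → Set (Fin k → Bool), ∀ δ : Bool, GoodValue 𝒞 δ →
      Γ δ ∈ 𝒞 ∧ ∀ t ∈ Γ δ, ∃ i : Fin k, t i = δ := by
  classical
  have noBad : ∀ δ : Bool, ¬ BadValue 𝒞 δ := by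
    intro δ hb
    induction hb with
    | base δ C hC i h =>
      refine hlit C hC i (!δ) fun t ht => ?_
      have := h t ht
      cases hti : t i <;> cases δ <;> simp_all
    | step δ C hC i m hm h ih =>
      refine hlit C hC i (!δ) fun t ht => ?_
      have : t i ≠ δ := fun hh => ih t ht hh
      cases hti : t i <;> cases δ <;> simp_all
  refine ⟨noBad false, noBad true, ⟨⟨true, noBad true⟩, ?_, ?_⟩, ?_⟩
  · intro δ; cases δ
    · exact h0
    · exact h1
  · intro Φ hover hcyc
    obtain ⟨hn2, hIJ⟩ := hcyc
    rw [List.length_map] at hn2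
    have hlen : (Φ.map Prod.fst).length = Φ.length := List.length_map _
    have hCmem : ∀ i : Fin Φ.length, (Φ.get i).2 ∈ 𝒞 ∧ Function.Injective (Φ.get i).1 :=
      fun i => hover (Φ.get i) (List.mem_iff_get.mpr ⟨i, rfl⟩)
    have hfull : ∀ (i : Fin Φ.length) (p : Fin k) (x : Bool),
        ∃ t ∈ (Φ.get i).2, t p = x := by
      intro i p x
      have := hlit (Φ.get i).2 (hCmem i).1 p (!x)
      push_neg at this
      obtain ⟨t, ht, htx⟩ := this
      exact ⟨t, ht, by cases x <;> cases h : t p <;> simp_all⟩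
    have hdiag : ∀ (i : Fin Φ.length) (p q : Fin k), ∃ t ∈ (Φ.get i).2, t p = t q := by
      intro i p q
      by_cases hpq : p = q
      · obtain ⟨t, ht⟩ := hne (Φ.get i).2 (hCmem i).1
        exact ⟨t, ht, by rw [hpq]⟩
      · have := hxor (Φ.get i).2 (hCmem i).1 p q hpq
        push_neg at this
        obtain ⟨t, ht, htpq⟩ := this
        exact ⟨t, ht, htpq⟩
    have hIJ' : ∀ i j : Fin Φ.length, (i : ℕ) < (j : ℕ) →
        if (j : ℕ) = (i : ℕ) + 1 ∨ ((i : ℕ) = 0 ∧ (j : ℕ) = Φ.length - 1)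
        then ((Finset.image ((Φ.get i).1) Finset.univ) ∩
          (Finset.image ((Φ.get j).1) Finset.univ)).card = 1
        else (Finset.image ((Φ.get i).1) Finset.univ) ∩
          (Finset.image ((Φ.get j).1) Finset.univ) = ∅ := by
      intro i j hij
      have h2 := hIJ (Fin.cast hlen.symm i) (Fin.cast hlen.symm j)
        (Fin.lt_def.mpr (by simp only [Fin.coe_cast]; exact hij))
      have hg : ∀ m : Fin Φ.length,
          (Φ.map Prod.fst).get (Fin.cast hlen.symm m) = (Φ.get m).1 := by
        intro m; simp [List.get_eq_getElem, List.getElem_map]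
      rw [hg, hg] at h2
      simpa [Fin.coe_cast, hlen, scopeVars] using h2
    obtain ⟨σ, hσ⟩ := cycle_sat (k := k) (n := Φ.length) hn2
      (fun i => (Φ.get i).1) (fun i => (Φ.get i).2)
      (fun i => (hCmem i).2) hfull hdiag hIJ'
    refine ⟨σ, ?_, ?_⟩
    · intro c hc
      obtain ⟨i, hi⟩ := List.mem_iff_get.mp hc
      rw [← hi]
      exact hσ i
    · intro c _ p
      exact noBad _
  · obtain ⟨C0, hC0, hC0n⟩ := h1
    obtain ⟨C1, hC1, hC1n⟩ := h0
    refine ⟨fun δ => if δ then C1 else C0, ?_⟩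
    intro δ _
    cases δ
    · refine ⟨hC0, fun u hu => ?_⟩
      by_contra hcon
      push_neg at hcon
      have : u = fun _ => true := funext fun i => by
        have := hcon i; cases h : u i <;> simp_all
      exact hC0n (this ▸ hu)
    · refine ⟨hC1, fun u hu => ?_⟩
      by_contra hcon
      push_neg at hcon
      have : u = fun _ => false := funext fun i => by
        have := hcon i; cases h : u i <;> simp_all
      exact hC1n (this ▸ hu)
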